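/- Let G be a group, D a subgroup of G, t_0, …, t_k ∈ G, and set E = ⋂_{i ≤ k} D^{t_i}. Suppose d ∈ ℕ is such that [E : E ∩ D^{t}] ≤ d for every t ∈ G. Then for all h_1, h_2 ∈ G one has [E^{h_1} : E^{h_1} ∩ E^{h_2}] ≤ d^{k+1}; in particular the conjugates {E^{t} : t ∈ G} form a uniformly commensurable family of subgroups. -/

import Mathlib

/-- The conjugate `D ^ t = t⁻¹ D t` of a subgroup `D` of `G` by an element `t : G`. -/
def conjSub {G : Type*} [Group G] (D : Subgroup G) (t : G) : Subgroup G :=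
  D.map (MulAut.conj t⁻¹).toMonoidHom

lemma conjSub_eq_comap {G : Type*} [Group G] (D : Subgroup G) (t : G) :
    conjSub D t = D.comap (MulAut.conj t).toMonoidHom := by
  unfold conjSub
  ext x
  simp [Subgroup.mem_map, Subgroup.mem_comap]
  constructor
  · rintro ⟨y, hy, rfl⟩
    convert hy using 2
    group
  · intro hx; exact ⟨t * x * t⁻¹, hx, by group⟩

lemma conjSub_conjSub {G : Type*} [Group G] (D : Subgroup G) (a b : G) :
    conjSub (conjSub D a) b = conjSub D (a * b) := by
  simp only [conjSub_eq_comap, Subgroup.comap_comap]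
  congr 1
  ext x
  simp [mul_assoc]

lemma conjSub_one {G : Type*} [Group G] (D : Subgroup G) : conjSub D 1 = D := by
  rw [conjSub_eq_comap]
  ext x
  simp [Subgroup.mem_comap]

lemma relindex_conjSub {G : Type*} [Group G] (H K : Subgroup G) (g : G) :
    (conjSub H g).relIndex (conjSub K g) = H.relIndex K := by
  rw [conjSub_eq_comap, conjSub_eq_comap, Subgroup.relIndex_comap,
    Subgroup.map_comap_eq_self_of_surjective (MulEquiv.surjective _)]

lemma conjSub_iInf {G : Type*} [Group G] {ι : Type*} (f : ι → Subgroup G) (g : G) :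
    conjSub (⨅ i, f i) g = ⨅ i, conjSub (f i) g := by
  simp only [conjSub_eq_comap]
  exact Subgroup.comap_iInf _ f

theorem stmt10 {G : Type*} [Group G] (D : Subgroup G) (k : ℕ) (t : Fin (k + 1) → G)
    (E : Subgroup G) (hE : E = ⨅ i, conjSub D (t i)) (d : ℕ)
    (hd : ∀ s : G, (conjSub D s).relIndex E ≠ 0 ∧ (conjSub D s).relIndex E ≤ d) :
    (∀ h₁ h₂ : G, (conjSub E h₂).relIndex (conjSub E h₁) ≠ 0 ∧
      (conjSub E h₂).relIndex (conjSub E h₁) ≤ d ^ (k + 1)) ∧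
    ∃ N : ℕ, ∀ s s' : G, (conjSub E s').relIndex (conjSub E s) ≠ 0 ∧
      (conjSub E s').relIndex (conjSub E s) ≤ N := by
  have key : ∀ s : G, (conjSub E s).relIndex E ≠ 0 ∧ (conjSub E s).relIndex E ≤ d ^ (k + 1) := by
    intro s
    have hEs : conjSub E s = ⨅ i, conjSub D (t i * s) := by
      rw [hE, conjSub_iInf]
      simp [conjSub_conjSub]
    constructor
    · rw [hEs]
      exact Subgroup.relIndex_iInf_ne_zero fun i => (hd (t i * s)).1
    · rw [hEs]
      calc (⨅ i, conjSub D (t i * s)).relIndex E ≤ ∏ i, (conjSub D (t i * s)).relIndex E :=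
            Subgroup.relIndex_iInf_le _
        _ ≤ ∏ _i : Fin (k + 1), d := Finset.prod_le_prod (fun i _ => Nat.zero_le _)
            (fun i _ => (hd (t i * s)).2)
        _ = d ^ (k + 1) := by simp
  have main : ∀ h₁ h₂ : G, (conjSub E h₂).relIndex (conjSub E h₁) ≠ 0 ∧
      (conjSub E h₂).relIndex (conjSub E h₁) ≤ d ^ (k + 1) := by
    intro h₁ h₂
    have : (conjSub E h₂).relIndex (conjSub E h₁)
        = (conjSub E (h₂ * h₁⁻¹)).relIndex E := by
      rw [← relindex_conjSub (conjSub E h₂) (conjSub E h₁) h₁⁻¹,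
        conjSub_conjSub, conjSub_conjSub, mul_inv_cancel, conjSub_one]
    rw [this]
    exact key _
  exact ⟨main, d ^ (k + 1), fun s s' => main s s'⟩
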